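/- Let p be a prime and let B be the quaternion algebra over ℚ with ℚ-basis 1, i, j, k, where i² = −1, j² = −p, and k = ij = −ji. Let O be the ℤ-submodule of B spanned by 1, i, (1+j)/2, (i+k)/2. If θ ∈ O is nonzero and anticommutes with i (that is, iθ = −θi), then θ = mj + nk for some integers m, n, and hence the reduced norm of θ satisfies Nrd(θ) = p(m² + n²) ≥ p. -/

import Mathlib

set_option maxHeartbeats 1000000


open Quaternion

/-- The quaternion algebra `(-1, -p | ℚ)`. -/
@[reducible] def B1728 (p : ℕ) := ℍ[ℚ, -1, -(p : ℚ)]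

/-- The basis element `i` of `B1728 p`, with `i² = -1`. -/
def qi (p : ℕ) : B1728 p := ⟨0, 1, 0, 0⟩

/-- The basis element `j` of `B1728 p`, with `j² = -p`. -/
def qj (p : ℕ) : B1728 p := ⟨0, 0, 1, 0⟩

/-- The basis element `k = ij = -ji` of `B1728 p`. -/
def qk (p : ℕ) : B1728 p := ⟨0, 0, 0, 1⟩

/-- The maximal order `O = ⟨1, i, (1+j)/2, (i+k)/2⟩_ℤ` in `(-1,-p|ℚ)`,
the endomorphism ring of `E₁₇₂₈`. -/
def O1728 (p : ℕ) : Submodule ℤ (B1728 p) :=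
  Submodule.span ℤ
    ({1, qi p, (2 : ℚ)⁻¹ • (1 + qj p), (2 : ℚ)⁻¹ • (qi p + qk p)} : Set (B1728 p))

/-- If a nonzero `θ` in the order `⟨1, i, (1+j)/2, (i+k)/2⟩_ℤ` of `(-1,-p|ℚ)` anticommutes
with `i`, then `θ = m j + n k` with `m, n ∈ ℤ`, and its reduced norm is
`p (m² + n²) ≥ p`. -/
theorem stmt_0 (p : ℕ) (hp : p.Prime) (θ : B1728 p) (hθO : θ ∈ O1728 p) (hθ0 : θ ≠ 0)
    (hanti : qi p * θ = -(θ * qi p)) :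
    ∃ m n : ℤ, θ = m • qj p + n • qk p ∧
      (θ * star θ).re = (p : ℚ) * ((m : ℚ) ^ 2 + (n : ℚ) ^ 2) ∧
      (p : ℚ) ≤ (θ * star θ).re := by
  have hP : ∃ a b c d : ℤ,
      θ = ⟨(a : ℚ) + c / 2, (b : ℚ) + d / 2, (c : ℚ) / 2, (d : ℚ) / 2⟩ := by
    refine Submodule.span_induction ?_ ?_ ?_ ?_ hθO
    · rintro x hx
      simp only [Set.mem_insert_iff, Set.mem_singleton_iff] at hx
      rcases hx with h | h | h | h
      · exact ⟨1, 0, 0, 0, by subst h; ext <;> simp⟩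
      · exact ⟨0, 1, 0, 0, by subst h; ext <;> simp [qi]⟩
      · exact ⟨0, 0, 1, 0, by subst h; ext <;> simp [qj]⟩
      · exact ⟨0, 0, 0, 1, by subst h; ext <;> simp [qi, qk]⟩
    · exact ⟨0, 0, 0, 0, by ext <;> simp⟩
    · rintro x y _ _ ⟨a, b, c, d, rfl⟩ ⟨a', b', c', d', rfl⟩
      exact ⟨a + a', b + b', c + c', d + d', by ext <;> push_cast <;> simp <;> ring⟩
    · rintro r x _ ⟨a, b, c, d, rfl⟩
      exact ⟨r * a, r * b, r * c, r * d, by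
        ext <;> push_cast <;> simp [QuaternionAlgebra.re_smul, QuaternionAlgebra.imI_smul,
          QuaternionAlgebra.imJ_smul, QuaternionAlgebra.imK_smul, zsmul_eq_mul] <;> ring⟩
  obtain ⟨a, b, c, d, rfl⟩ := hP
  rw [QuaternionAlgebra.ext_iff] at hanti
  simp only [QuaternionAlgebra.re_mul, QuaternionAlgebra.imI_mul, QuaternionAlgebra.imJ_mul,
    QuaternionAlgebra.imK_mul, QuaternionAlgebra.re_neg, QuaternionAlgebra.imI_neg,
    QuaternionAlgebra.imJ_neg, QuaternionAlgebra.imK_neg, qi] at hanti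
  obtain ⟨h1, h2, h3, h4⟩ := hanti
  have hre : (a : ℚ) + c / 2 = 0 := by linarith
  have himI : (b : ℚ) + d / 2 = 0 := by linarith
  have ha : (c : ℚ) = -2 * a := by linarith
  have hb : (d : ℚ) = -2 * b := by linarith
  have hnorm : ((⟨(a : ℚ) + c / 2, (b : ℚ) + d / 2, (c : ℚ) / 2, (d : ℚ) / 2⟩ : B1728 p) *
      star ⟨(a : ℚ) + c / 2, (b : ℚ) + d / 2, (c : ℚ) / 2, (d : ℚ) / 2⟩).re
      = (p : ℚ) * (((-a : ℤ) : ℚ) ^ 2 + ((-b : ℤ) : ℚ) ^ 2) := by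
    simp only [QuaternionAlgebra.re_mul, QuaternionAlgebra.re_star, QuaternionAlgebra.imI_star,
      QuaternionAlgebra.imJ_star, QuaternionAlgebra.imK_star]
    push_cast
    rw [ha, hb]; ring
  refine ⟨-a, -b, ?_, hnorm, ?_⟩
  · ext <;> simp [qj, qk, QuaternionAlgebra.re_smul, QuaternionAlgebra.imI_smul,
      QuaternionAlgebra.imJ_smul, QuaternionAlgebra.imK_smul, zsmul_eq_mul] <;> push_cast <;> linarith
  · rw [hnorm]
    have hab : a ≠ 0 ∨ b ≠ 0 := by
      clear hnorm h1 h2 h3 h4 hθO hre himI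
      by_contra h
      push_neg at h
      obtain ⟨ha0, hb0⟩ := h
      apply hθ0
      subst ha0; subst hb0
      push_cast at ha hb
      have hc0 : (c : ℚ) = 0 := by linarith
      have hd0 : (d : ℚ) = 0 := by linarith
      ext <;> simp [hc0, hd0]
    have hsq : (1 : ℤ) ≤ a ^ 2 + b ^ 2 := by
      rcases hab with h | h
      · have := Int.one_le_abs h
        nlinarith [sq_abs a, sq_nonneg b]
      · have := Int.one_le_abs h
        nlinarith [sq_abs b, sq_nonneg a]
    have hsq' : (1 : ℚ) ≤ ((-a : ℤ) : ℚ) ^ 2 + ((-b : ℤ) : ℚ) ^ 2 := by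
      push_cast
      exact_mod_cast hsq.trans_eq (by push_cast; ring)
    have hp1 : (1 : ℚ) ≤ (p : ℚ) := by exact_mod_cast hp.one_lt.le
    nlinarith [hp1, hsq']
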